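/- arXiv:2507.02774 — 10 statements merged into one kernel-verified Lean document; each statement's English description precedes it below -/
import Mathlib

section
/- Let G=(V,E) be an undirected graph, t ∈ V, and for a set N ⊆ V define the interior I_t(N) as the set of vertices v ∈ V \ N such that no path from v to t exists in G with all vertices avoiding N, and H_t(N) = N ∪ I_t(N). Then for any sets A, B ⊆ V, letting N∩ = (A ∩ I_t(B)) ∪ (B ∩ I_t(A)) ∪ (A ∩ B), we have I_t(N∩) = I_t(A) ∩ I_t(B). -/
open Finset

variable {V : Type*}

/-- `N` is a vertex cut between `S` and `T`: every walk from a vertex of `S` to a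
vertex of `T` contains a vertex of `N` (which may belong to `S ∪ T`). -/
def IsCut (G : SimpleGraph V) (S T N : Set V) : Prop :=
  ∀ s ∈ S, ∀ t ∈ T, ∀ p : G.Walk s t, ∃ u ∈ p.support, u ∈ N

/-- The interior `I_t(N)`: vertices outside `N` from which every walk to `t`
passes through `N` (i.e. no path to `t` exists after deleting `N`). -/
def interiorSet (G : SimpleGraph V) (t : V) (N : Set V) : Set V :=
  {v | v ∉ N ∧ ∀ p : G.Walk v t, ∃ u ∈ p.support, u ∈ N}

/-- `H_t(N) = N ∪ I_t(N)`. -/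
def hullSet (G : SimpleGraph V) (t : V) (N : Set V) : Set V :=
  N ∪ interiorSet G t N

/-- The minimum weight of a vertex cut between `S` and `T`. -/
noncomputable def sep [Fintype V] (G : SimpleGraph V) (w : V → ℝ) (S T : Set V) : ℝ :=
  sInf {x : ℝ | ∃ N : Finset V, IsCut G S T ↑N ∧ x = ∑ v ∈ N, w v}

/-- First vertex of a walk lying in a set `S`, with an `S`-free prefix. -/
lemma first_hit {G : SimpleGraph V} {v t : V} (p : G.Walk v t) (S : Set V)
    (h : ∃ u ∈ p.support, u ∈ S) :
    ∃ u, u ∈ S ∧ u ∈ p.support ∧ ∃ q : G.Walk v u,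
      (∀ x ∈ q.support, x ∈ S → x = u) ∧ (∀ x ∈ q.support, x ∈ p.support) := by
  induction p with
  | nil =>
    obtain ⟨u, hu, huS⟩ := h
    simp only [SimpleGraph.Walk.support_nil, List.mem_singleton] at hu
    subst hu
    exact ⟨u, huS, by simp, SimpleGraph.Walk.nil, by simp, by simp⟩
  | @cons a b c hab p ih =>
    by_cases hvS : a ∈ S
    · exact ⟨a, hvS, by simp, SimpleGraph.Walk.nil, by simp, by simp⟩
    · have h' : ∃ u ∈ p.support, u ∈ S := by
        obtain ⟨u, hu, huS⟩ := h
        rw [SimpleGraph.Walk.support_cons, List.mem_cons] at hu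
        rcases hu with rfl | hu
        · exact absurd huS hvS
        · exact ⟨u, hu, huS⟩
      obtain ⟨u, huS, hup, q, hq1, hq2⟩ := ih h'
      refine ⟨u, huS, by simp [hup], SimpleGraph.Walk.cons hab q, ?_, ?_⟩
      · intro x hx hxS
        rw [SimpleGraph.Walk.support_cons, List.mem_cons] at hx
        rcases hx with rfl | hx
        · exact absurd hxS hvS
        · exact hq1 x hx hxS
      · intro x hx
        rw [SimpleGraph.Walk.support_cons, List.mem_cons] at hx
        rcases hx with rfl | hx
        · simp
        · simp [hq2 x hx]

/-- A suffix walk from any vertex on a walk's support. -/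
lemma suffix_walk {G : SimpleGraph V} {v t u : V} (p : G.Walk v t) (hu : u ∈ p.support) :
    ∃ r : G.Walk u t, ∀ x ∈ r.support, x ∈ p.support := by
  classical
  exact ⟨p.dropUntil u hu, fun x hx => SimpleGraph.Walk.support_dropUntil_subset p hu hx⟩

theorem interior_of_cap_cut [Fintype V] (G : SimpleGraph V) (t : V) (A B : Set V) :
    interiorSet G t ((A ∩ interiorSet G t B) ∪ (B ∩ interiorSet G t A) ∪ (A ∩ B))
      = interiorSet G t A ∩ interiorSet G t B := by
  set IA := interiorSet G t A with hIA
  set IB := interiorSet G t B with hIB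
  set N : Set V := (A ∩ IB) ∪ (B ∩ IA) ∪ (A ∩ B) with hN
  -- Key: a walk avoiding `B` also avoids `IB`.
  have avoid_int : ∀ (C : Set V) (v : V) (q : G.Walk v t),
      (∀ x ∈ q.support, x ∉ C) → ∀ x ∈ q.support, x ∉ interiorSet G t C := by
    intro C v q hq x hx hxI
    obtain ⟨r, hr⟩ := suffix_walk q hx
    obtain ⟨u, hu, huC⟩ := hxI.2 r
    exact hq u (hr u hu) huC
  ext v
  constructor
  · rintro ⟨hvN, hcut⟩
    -- v ∉ A
    have hvA : v ∉ A := by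
      intro hvA
      have hvIB : v ∉ IB := fun h => hvN (Or.inl (Or.inl ⟨hvA, h⟩))
      have hvB : v ∉ B := fun h => hvN (Or.inr ⟨hvA, h⟩)
      -- so some walk from v to t avoids B
      have : ∃ q : G.Walk v t, ∀ x ∈ q.support, x ∉ B := by
        by_contra hcon
        push_neg at hcon
        exact hvIB ⟨hvB, fun p => by
          obtain ⟨x, hx, hxB⟩ := hcon p
          exact ⟨x, hx, hxB⟩⟩
      obtain ⟨q, hq⟩ := this
      obtain ⟨u, hu, huN⟩ := hcut q
      have huIB := avoid_int B v q hq u hu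
      rcases huN with (⟨_, h⟩ | ⟨_, _⟩) | ⟨_, hB⟩
      · exact huIB h
      · exact hq u hu ‹u ∈ B›
      · exact hq u hu hB
    have hvB : v ∉ B := by
      intro hvB
      have hvIA : v ∉ IA := fun h => hvN (Or.inl (Or.inr ⟨hvB, h⟩))
      have : ∃ q : G.Walk v t, ∀ x ∈ q.support, x ∉ A := by
        by_contra hcon
        push_neg at hcon
        exact hvIA ⟨hvA, fun p => by
          obtain ⟨x, hx, hxA⟩ := hcon p
          exact ⟨x, hx, hxA⟩⟩
      obtain ⟨q, hq⟩ := this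
      obtain ⟨u, hu, huN⟩ := hcut q
      have huIA := avoid_int A v q hq u hu
      rcases huN with (⟨hA, _⟩ | ⟨_, h⟩) | ⟨hA, _⟩
      · exact hq u hu hA
      · exact huIA h
      · exact hq u hu hA
    refine ⟨⟨hvA, ?_⟩, ⟨hvB, ?_⟩⟩
    · intro p
      obtain ⟨u, hu, huN⟩ := hcut p
      rcases huN with (⟨hA, _⟩ | ⟨_, hIAu⟩) | ⟨hA, _⟩
      · exact ⟨u, hu, hA⟩
      · obtain ⟨r, hr⟩ := suffix_walk p hu
        obtain ⟨x, hx, hxA⟩ := hIAu.2 r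
        exact ⟨x, hr x hx, hxA⟩
      · exact ⟨u, hu, hA⟩
    · intro p
      obtain ⟨u, hu, huN⟩ := hcut p
      rcases huN with (⟨_, hIBu⟩ | ⟨hB, _⟩) | ⟨_, hB⟩
      · obtain ⟨r, hr⟩ := suffix_walk p hu
        obtain ⟨x, hx, hxB⟩ := hIBu.2 r
        exact ⟨x, hr x hx, hxB⟩
      · exact ⟨u, hu, hB⟩
      · exact ⟨u, hu, hB⟩
  · rintro ⟨⟨hvA, hAcut⟩, ⟨hvB, hBcut⟩⟩
    refine ⟨?_, ?_⟩
    · rintro ((⟨h, _⟩ | ⟨h, _⟩) | ⟨h, _⟩)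
      · exact hvA h
      · exact hvB h
      · exact hvA h
    · intro p
      obtain ⟨u0, hu0, hu0A⟩ := hAcut p
      have hhit : ∃ u ∈ p.support, u ∈ A ∪ B := ⟨u0, hu0, Or.inl hu0A⟩
      obtain ⟨u, huAB, hup, q, hq1, hq2⟩ := first_hit p (A ∪ B) hhit
      refine ⟨u, hup, ?_⟩
      rcases huAB with huA | huB
      · by_cases huB : u ∈ B
        · exact Or.inr ⟨huA, huB⟩
        -- show u ∈ IB
        refine Or.inl (Or.inl ⟨huA, huB, ?_⟩)
        intro s
        by_contra hcon
        push_neg at hcon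
        -- q.append s avoids B, contradicting v ∈ IB
        obtain ⟨x, hx, hxB⟩ := hBcut (q.append s)
        rw [SimpleGraph.Walk.mem_support_append_iff] at hx
        rcases hx with hx | hx
        · have := hq1 x hx (Or.inr hxB)
          subst this
          exact huB hxB
        · exact hcon x hx hxB
      · by_cases huA : u ∈ A
        · exact Or.inr ⟨huA, huB⟩
        refine Or.inl (Or.inr ⟨huB, huA, ?_⟩)
        intro s
        by_contra hcon
        push_neg at hcon
        obtain ⟨x, hx, hxA⟩ := hAcut (q.append s)
        rw [SimpleGraph.Walk.mem_support_append_iff] at hx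
        rcases hx with hx | hx
        · have := hq1 x hx (Or.inl hxA)
          subst this
          exact huA hxA
        · exact hcon x hx hxA
end

section
/- Let G=(V,E) be an undirected graph, t ∈ V, and define I_t and H_t as usual. Then for any sets A, B ⊆ V, letting N∩ = (A ∩ I_t(B)) ∪ (B ∩ I_t(A)) ∪ (A ∩ B), we have H_t(N∩) = H_t(A) ∩ H_t(B). -/
open Finset

variable {V : Type*}

lemma mem_hullSet_iff (G : SimpleGraph V) (t : V) (N : Set V) (v : V) :
    v ∈ hullSet G t N ↔ ∀ p : G.Walk v t, ∃ u ∈ p.support, u ∈ N := by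
  constructor
  · rintro (hv | ⟨_, hv⟩) p
    · exact ⟨v, p.start_mem_support, hv⟩
    · exact hv p
  · intro h
    by_cases hv : v ∈ N
    · exact Or.inl hv
    · exact Or.inr ⟨hv, h⟩

lemma key_lemma (G : SimpleGraph V) (t : V) (A B : Set V) {v : V} (p : G.Walk v t)
    (hA : ∀ q : G.Walk v t, ∃ u ∈ q.support, u ∈ A)
    (hB : ∀ q : G.Walk v t, ∃ u ∈ q.support, u ∈ B) :
    ∃ u ∈ p.support,
      u ∈ (A ∩ interiorSet G t B) ∪ (B ∩ interiorSet G t A) ∪ (A ∩ B) := by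
  induction p with
  | nil =>
    obtain ⟨u, hu, huA⟩ := hA .nil
    simp only [SimpleGraph.Walk.support_nil, List.mem_singleton] at hu
    subst hu
    obtain ⟨w, hw, hwB⟩ := hB .nil
    simp only [SimpleGraph.Walk.support_nil, List.mem_singleton] at hw
    subst hw
    exact ⟨_, SimpleGraph.Walk.start_mem_support _, Or.inr ⟨huA, hwB⟩⟩
  | @cons v w t h q ih =>
    by_cases hvA : v ∈ A
    · by_cases hvB : v ∈ B
      · exact ⟨v, by simp, Or.inr ⟨hvA, hvB⟩⟩
      · exact ⟨v, by simp, Or.inl (Or.inl ⟨hvA, hvB, hB⟩)⟩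
    · by_cases hvB : v ∈ B
      · exact ⟨v, by simp, Or.inl (Or.inr ⟨hvB, hvA, hA⟩)⟩
      · have hA' : ∀ r : G.Walk w t, ∃ u ∈ r.support, u ∈ A := by
          intro r
          obtain ⟨u, hu, huA⟩ := hA (SimpleGraph.Walk.cons h r)
          simp only [SimpleGraph.Walk.support_cons, List.mem_cons] at hu
          rcases hu with rfl | hu
          · exact absurd huA hvA
          · exact ⟨u, hu, huA⟩
        have hB' : ∀ r : G.Walk w t, ∃ u ∈ r.support, u ∈ B := by
          intro r
          obtain ⟨u, hu, huB⟩ := hB (SimpleGraph.Walk.cons h r)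
          simp only [SimpleGraph.Walk.support_cons, List.mem_cons] at hu
          rcases hu with rfl | hu
          · exact absurd huB hvB
          · exact ⟨u, hu, huB⟩
        obtain ⟨u, hu, huN⟩ := ih hA' hB'
        exact ⟨u, by simp [hu], huN⟩

theorem hull_of_cap_cut [Fintype V] (G : SimpleGraph V) (t : V) (A B : Set V) :
    hullSet G t ((A ∩ interiorSet G t B) ∪ (B ∩ interiorSet G t A) ∪ (A ∩ B))
      = hullSet G t A ∩ hullSet G t B := by
  classical
  ext v
  simp only [Set.mem_inter_iff, mem_hullSet_iff]
  constructor
  · intro h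
    have aux : ∀ (C : Set V),
        (∀ u, u ∈ (A ∩ interiorSet G t B) ∪ (B ∩ interiorSet G t A) ∪ (A ∩ B) →
          ∀ q : G.Walk u t, ∃ w ∈ q.support, w ∈ C) →
        ∀ p : G.Walk v t, ∃ u ∈ p.support, u ∈ C := by
      intro C hC p
      obtain ⟨u, hu, huN⟩ := h p
      obtain ⟨w, hw, hwC⟩ := hC u huN (p.dropUntil u hu)
      exact ⟨w, SimpleGraph.Walk.support_dropUntil_subset _ _ hw, hwC⟩
    constructor
    · refine aux A ?_
      rintro u ((⟨hA, _⟩ | ⟨_, hIA⟩) | ⟨hA, _⟩) q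
      · exact ⟨u, q.start_mem_support, hA⟩
      · exact hIA.2 q
      · exact ⟨u, q.start_mem_support, hA⟩
    · refine aux B ?_
      rintro u ((⟨_, hIB⟩ | ⟨hB, _⟩) | ⟨_, hB⟩) q
      · exact hIB.2 q
      · exact ⟨u, q.start_mem_support, hB⟩
      · exact ⟨u, q.start_mem_support, hB⟩
  · rintro ⟨hA, hB⟩ p
    exact key_lemma G t A B p hA hB
end

section
/- Let G=(V,E) be an undirected graph, t ∈ V, and define I_t and H_t as usual. Then for any sets A, B ⊆ V, letting N∪ = (A \ I_t(B)) ∪ (B \ I_t(A)), we have I_t(A) ∪ I_t(B) ⊆ I_t(N∪) and H_t(A) ∪ H_t(B) ⊆ H_t(N∪). -/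
open Finset

variable {V : Type*}

lemma walk_meets_cut (G : SimpleGraph V) (A B : Set V) {x t : V} (p : G.Walk x t)
    (h : ∃ u ∈ p.support, u ∈ A ∪ B) :
    ∃ u ∈ p.support, u ∈ (A \ interiorSet G t B) ∪ (B \ interiorSet G t A) := by
  induction p with
  | nil =>
    rcases h with ⟨u, hu, huAB⟩
    simp only [SimpleGraph.Walk.support_nil, List.mem_singleton] at hu
    subst hu
    refine ⟨u, by simp, ?_⟩
    rcases huAB with h | h
    · refine Or.inl ⟨h, fun hI => hI.1 ?_⟩
      rcases hI.2 SimpleGraph.Walk.nil with ⟨w, hw, hwB⟩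
      simp only [SimpleGraph.Walk.support_nil, List.mem_singleton] at hw
      exact hw ▸ hwB
    · refine Or.inr ⟨h, fun hI => hI.1 ?_⟩
      rcases hI.2 SimpleGraph.Walk.nil with ⟨w, hw, hwA⟩
      simp only [SimpleGraph.Walk.support_nil, List.mem_singleton] at hw
      exact hw ▸ hwA
  | cons hadj q ih =>
    rcases h with ⟨u, hu, huAB⟩
    by_cases hq : ∃ w ∈ q.support, w ∈ A ∪ B
    · rcases ih hq with ⟨w, hw, hwN⟩
      exact ⟨w, by simp [hw], hwN⟩
    · push_neg at hq
      rw [SimpleGraph.Walk.support_cons] at hu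
      rcases List.mem_cons.mp hu with rfl | h'
      swap
      · exact absurd huAB (hq u h')
      refine ⟨u, by simp, ?_⟩
      rcases huAB with h | h
      · refine Or.inl ⟨h, fun hI => ?_⟩
        rcases hI.2 (SimpleGraph.Walk.cons hadj q) with ⟨w, hw, hwB⟩
        rw [SimpleGraph.Walk.support_cons] at hw
        rcases List.mem_cons.mp hw with rfl | hw'
        · exact hI.1 hwB
        · exact hq w hw' (Or.inr hwB)
      · refine Or.inr ⟨h, fun hI => ?_⟩
        rcases hI.2 (SimpleGraph.Walk.cons hadj q) with ⟨w, hw, hwA⟩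
        rw [SimpleGraph.Walk.support_cons] at hw
        rcases List.mem_cons.mp hw with rfl | hw'
        · exact hI.1 hwA
        · exact hq w hw' (Or.inl hwA)

theorem interior_hull_of_cup_cut [Fintype V] (G : SimpleGraph V) (t : V) (A B : Set V) :
    interiorSet G t A ∪ interiorSet G t B
        ⊆ interiorSet G t ((A \ interiorSet G t B) ∪ (B \ interiorSet G t A)) ∧
      hullSet G t A ∪ hullSet G t B
        ⊆ hullSet G t ((A \ interiorSet G t B) ∪ (B \ interiorSet G t A)) := by
  set N : Set V := (A \ interiorSet G t B) ∪ (B \ interiorSet G t A) with hN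
  have aux : ∀ {x : V} (p : G.Walk x t), (∃ u ∈ p.support, u ∈ A ∪ B) →
      ∃ u ∈ p.support, u ∈ N := fun p h => walk_meets_cut G A B p h
  have hIA : interiorSet G t A ⊆ interiorSet G t N := by
    rintro v ⟨hvA, hvp⟩
    refine ⟨?_, fun p => ?_⟩
    · rintro (⟨hA, _⟩ | ⟨_, hIB⟩)
      · exact hvA hA
      · exact hIB ⟨hvA, hvp⟩
    · rcases hvp p with ⟨w, hw, hwA⟩
      exact aux p ⟨w, hw, Or.inl hwA⟩
  have hIB : interiorSet G t B ⊆ interiorSet G t N := by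
    rintro v ⟨hvB, hvp⟩
    refine ⟨?_, fun p => ?_⟩
    · rintro (⟨_, hIB'⟩ | ⟨hB, _⟩)
      · exact hIB' ⟨hvB, hvp⟩
      · exact hvB hB
    · rcases hvp p with ⟨w, hw, hwB⟩
      exact aux p ⟨w, hw, Or.inr hwB⟩
  have hI : interiorSet G t A ∪ interiorSet G t B ⊆ interiorSet G t N :=
    Set.union_subset hIA hIB
  refine ⟨hI, ?_⟩
  rintro v (hv | hv)
  · rcases hv with hv | hv
    · by_cases hvIB : v ∈ interiorSet G t B
      · exact Or.inr (hIB hvIB)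
      · exact Or.inl (Or.inl ⟨hv, hvIB⟩)
    · exact Or.inr (hIA hv)
  · rcases hv with hv | hv
    · by_cases hvIA : v ∈ interiorSet G t A
      · exact Or.inr (hIA hvIA)
      · exact Or.inl (Or.inr ⟨hv, hvIA⟩)
    · exact Or.inr (hIB hv)
end

section
/- Let G=(V,E) be an undirected graph with vertex weights w : V → ℝ≥0, and t ∈ V. For sets A, B ⊆ V define N∩ = (A ∩ I_t(B)) ∪ (B ∩ I_t(A)) ∪ (A ∩ B) and N∪ = (A \ I_t(B)) ∪ (B \ I_t(A)). Then w(A) + w(B) ≥ w(N∩) + w(N∪), where w(S) = Σ_{v ∈ S} w(v). -/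
open Finset

variable {V : Type*}

theorem weight_cap_add_cup_le [Fintype V] (G : SimpleGraph V) (t : V)
    (w : V → ℝ) (hw : ∀ v, 0 ≤ w v) (A B : Set V) :
    (∑ᶠ v ∈ ((A ∩ interiorSet G t B) ∪ (B ∩ interiorSet G t A) ∪ (A ∩ B)), w v)
        + (∑ᶠ v ∈ ((A \ interiorSet G t B) ∪ (B \ interiorSet G t A)), w v)
      ≤ (∑ᶠ v ∈ A, w v) + (∑ᶠ v ∈ B, w v) := by
  classical
  set P : Set V := (A ∩ interiorSet G t B) ∪ (B ∩ interiorSet G t A) ∪ (A ∩ B) with hP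
  set Q : Set V := (A \ interiorSet G t B) ∪ (B \ interiorSet G t A) with hQ
  have hcoe : ∀ S : Set V, (∑ᶠ v ∈ S, w v) = ∑ v ∈ S.toFinset, w v := by
    intro S
    rw [← finsum_mem_coe_finset, Set.coe_toFinset]
  rw [hcoe P, hcoe Q, hcoe A, hcoe B]
  have key : ∀ (s u : Finset V), s ∪ u ⊆ A.toFinset ∪ B.toFinset →
      s ∩ u ⊆ A.toFinset ∩ B.toFinset →
      (∑ v ∈ s, w v) + ∑ v ∈ u, w v ≤ (∑ v ∈ A.toFinset, w v) + ∑ v ∈ B.toFinset, w v := by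
    intro s u h1 h2
    rw [← Finset.sum_union_inter, ← Finset.sum_union_inter (s₁ := A.toFinset) (s₂ := B.toFinset)]
    exact add_le_add (Finset.sum_le_sum_of_subset_of_nonneg h1 fun v _ _ => hw v)
      (Finset.sum_le_sum_of_subset_of_nonneg h2 fun v _ _ => hw v)
  apply key
  · intro v hv
    simp only [Finset.mem_union, Set.mem_toFinset, hP, hQ, Set.mem_union, Set.mem_inter_iff,
      Set.mem_diff] at hv ⊢
    tauto
  · intro v hv
    simp only [Finset.mem_inter, Set.mem_toFinset, hP, hQ, Set.mem_union, Set.mem_inter_iff,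
      Set.mem_diff] at hv ⊢
    obtain ⟨h1, h2⟩ := hv
    rcases h1 with (⟨hA, hIB⟩ | ⟨hB, hIA⟩) | hAB
    · rcases h2 with ⟨_, hnIB⟩ | ⟨hB, _⟩
      · exact absurd hIB hnIB
      · exact ⟨hA, hB⟩
    · rcases h2 with ⟨hA, _⟩ | ⟨_, hnIA⟩
      · exact ⟨hA, hB⟩
      · exact absurd hIA hnIA
    · exact hAB
end

section
/- Let G=(V,E) be an undirected graph with vertex weights w : V → ℝ≥0 and t ∈ V. For S ⊆ V with t ∉ S, define sep^w(S,t) as the minimum of w(N) over all vertex cuts N between S and {t} (i.e., sets N such that every path from a vertex of S to t contains a vertex of N; N may intersect S), and define Δ^w(S,v,t) = sep^w(S ∪ {v}, t) − sep^w(S, t). Then for all S ⊆ S' ⊆ V and all v, t ∈ V: Δ^w(S', v, t) ≤ Δ^w(S, v, t). -/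
open Finset

variable {V : Type*}

/-- `Δ^w(S, v, t) = sep^w(S ∪ {v}, {t}) − sep^w(S, {t})`. -/
noncomputable def delta [Fintype V] (G : SimpleGraph V) (w : V → ℝ) (S : Set V) (v t : V) : ℝ :=
  sep G w (S ∪ {v}) {t} - sep G w S {t}

/- ### Auxiliary lemmas -/

lemma t_not_mem_interiorSet (G : SimpleGraph V) (t : V) (N : Set V) :
    t ∉ interiorSet G t N := by
  rintro ⟨htN, hall⟩
  obtain ⟨u, hu, huN⟩ := hall SimpleGraph.Walk.nil
  simp only [SimpleGraph.Walk.support_nil, List.mem_singleton] at hu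
  subst hu; exact htN huN

lemma subset_hullSet {G : SimpleGraph V} {X : Set V} {t : V} {N : Set V}
    (h : IsCut G X {t} N) : X ⊆ hullSet G t N := by
  intro x hx
  by_cases hxN : x ∈ N
  · exact Or.inl hxN
  · exact Or.inr ⟨hxN, fun p => h x hx t rfl p⟩

/-- If a vertex is not in the hull, there is a walk from it to `t` avoiding `N`. -/
lemma exists_walk_of_not_mem_hull {G : SimpleGraph V} {t : V} {N : Set V} {y : V}
    (hy : y ∉ hullSet G t N) :
    ∃ p : G.Walk y t, ∀ u ∈ p.support, u ∉ N := by
  have hyN : y ∉ N := fun h => hy (Or.inl h)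
  by_contra hcon
  push_neg at hcon
  exact hy (Or.inr ⟨hyN, fun p => by
    obtain ⟨u, hu, hu2⟩ := hcon p
    exact ⟨u, hu, hu2⟩⟩)

/-- Cuts cut their own hull from `t`. -/
lemma hull_cut {G : SimpleGraph V} {t : V} {N : Set V} {s : V}
    (hs : s ∈ hullSet G t N) (p : G.Walk s t) : ∃ u ∈ p.support, u ∈ N := by
  rcases hs with hs | hs
  · exact ⟨s, p.start_mem_support, hs⟩
  · exact hs.2 p

/-- Neighbors of interior vertices are in the hull. -/
lemma adj_mem_hull {G : SimpleGraph V} {t : V} {N : Set V} {x y : V}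
    (hx : x ∈ interiorSet G t N) (hxy : G.Adj x y) : y ∈ hullSet G t N := by
  by_contra hy
  obtain ⟨p, hp⟩ := exists_walk_of_not_mem_hull hy
  obtain ⟨u, hu, huN⟩ := hx.2 (SimpleGraph.Walk.cons hxy p)
  rw [SimpleGraph.Walk.support_cons, List.mem_cons] at hu
  rcases hu with rfl | hu
  · exact hx.1 huN
  · exact hp u hu huN

/-- The "intersection" cut: every walk from `H₁ ∩ H₂` to `t` meets
`(A ∩ H₂) ∪ (B ∩ H₁)`. -/
lemma inter_cut {G : SimpleGraph V} {t : V} {A B : Set V} :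
    ∀ {s : V} (p : G.Walk s t),
      s ∈ hullSet G t A → s ∈ hullSet G t B →
      ∃ u ∈ p.support, (u ∈ A ∧ u ∈ hullSet G t B) ∨ (u ∈ B ∧ u ∈ hullSet G t A) := by
  intro s p
  induction p with
  | @nil x =>
    intro hs1 hs2
    rcases hs1 with hxA | hxI
    · exact ⟨x, SimpleGraph.Walk.start_mem_support _, Or.inl ⟨hxA, hs2⟩⟩
    · exact (t_not_mem_interiorSet G x A hxI).elim
  | @cons s s' t h q ih =>
    intro hs1 hs2
    by_cases hsA : s ∈ A
    · exact ⟨s, (SimpleGraph.Walk.cons h q).start_mem_support, Or.inl ⟨hsA, hs2⟩⟩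
    by_cases hsB : s ∈ B
    · exact ⟨s, (SimpleGraph.Walk.cons h q).start_mem_support, Or.inr ⟨hsB, hs1⟩⟩
    have hsI1 : s ∈ interiorSet G t A := hs1.resolve_left hsA
    have hsI2 : s ∈ interiorSet G t B := hs2.resolve_left hsB
    obtain ⟨u, hu, hC⟩ := ih (adj_mem_hull hsI1 h) (adj_mem_hull hsI2 h)
    exact ⟨u, by rw [SimpleGraph.Walk.support_cons]; exact List.mem_cons_of_mem _ hu, hC⟩

/-- The "union" cut: every walk from `H₁ ∪ H₂` to `t` meets
`(A \ I₂) ∪ (B \ I₁)`. -/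
lemma union_cut {G : SimpleGraph V} {t : V} {A B : Set V} :
    ∀ {s : V} (p : G.Walk s t),
      s ∈ hullSet G t A ∪ hullSet G t B →
      ∃ u ∈ p.support,
        (u ∈ A ∧ u ∉ interiorSet G t B) ∨ (u ∈ B ∧ u ∉ interiorSet G t A) := by
  intro s p
  induction p with
  | @nil x =>
    intro hs
    rcases hs with hs | hs
    · rcases hs with hsA | hsI
      · exact ⟨x, SimpleGraph.Walk.start_mem_support _,
          Or.inl ⟨hsA, t_not_mem_interiorSet G x B⟩⟩
      · exact (t_not_mem_interiorSet G x A hsI).elim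
    · rcases hs with hsB | hsI
      · exact ⟨x, SimpleGraph.Walk.start_mem_support _,
          Or.inr ⟨hsB, t_not_mem_interiorSet G x A⟩⟩
      · exact (t_not_mem_interiorSet G x B hsI).elim
  | @cons s s' t h q ih =>
    intro hs
    by_cases hs' : s' ∈ hullSet G t A ∪ hullSet G t B
    · obtain ⟨u, hu, hC⟩ := ih hs'
      exact ⟨u, by rw [SimpleGraph.Walk.support_cons]; exact List.mem_cons_of_mem _ hu, hC⟩
    · -- s' is outside both hulls; then s must be in A \ I₂ or B \ I₁.
      have hs'A : s' ∉ hullSet G t A := fun hh => hs' (Or.inl hh)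
      have hs'B : s' ∉ hullSet G t B := fun hh => hs' (Or.inr hh)
      obtain ⟨pA, hpA⟩ := exists_walk_of_not_mem_hull hs'A
      obtain ⟨pB, hpB⟩ := exists_walk_of_not_mem_hull hs'B
      have hsnotI1 : s ∉ interiorSet G t A := by
        intro hsI
        obtain ⟨u, hu, huA⟩ := hsI.2 (SimpleGraph.Walk.cons h pA)
        rw [SimpleGraph.Walk.support_cons, List.mem_cons] at hu
        rcases hu with rfl | hu
        · exact hsI.1 huA
        · exact hpA u hu huA
      have hsnotI2 : s ∉ interiorSet G t B := by
        intro hsI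
        obtain ⟨u, hu, huB⟩ := hsI.2 (SimpleGraph.Walk.cons h pB)
        rw [SimpleGraph.Walk.support_cons, List.mem_cons] at hu
        rcases hu with rfl | hu
        · exact hsI.1 huB
        · exact hpB u hu huB
      rcases hs with hs | hs
      · have hsA : s ∈ A := hs.resolve_right hsnotI1
        exact ⟨s, (SimpleGraph.Walk.cons h q).start_mem_support, Or.inl ⟨hsA, hsnotI2⟩⟩
      · have hsB : s ∈ B := hs.resolve_right hsnotI2
        exact ⟨s, (SimpleGraph.Walk.cons h q).start_mem_support, Or.inr ⟨hsB, hsnotI1⟩⟩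

lemma cut_set_finite [Fintype V] (G : SimpleGraph V) (w : V → ℝ) (S T : Set V) :
    {x : ℝ | ∃ N : Finset V, IsCut G S T ↑N ∧ x = ∑ v ∈ N, w v}.Finite := by
  apply Set.Finite.subset (Set.finite_range (fun N : Finset V => ∑ v ∈ N, w v))
  rintro x ⟨N, -, rfl⟩
  exact ⟨N, rfl⟩

lemma cut_set_nonempty [Fintype V] (G : SimpleGraph V) (w : V → ℝ) (S T : Set V) :
    {x : ℝ | ∃ N : Finset V, IsCut G S T ↑N ∧ x = ∑ v ∈ N, w v}.Nonempty :=
  ⟨∑ v ∈ univ, w v, univ, fun s _ t _ p => ⟨s, p.start_mem_support, by simp⟩, rfl⟩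

lemma sep_le_sum [Fintype V] {G : SimpleGraph V} {w : V → ℝ} {S T : Set V} {N : Finset V}
    (h : IsCut G S T ↑N) : sep G w S T ≤ ∑ v ∈ N, w v :=
  csInf_le (cut_set_finite G w S T).bddBelow ⟨N, h, rfl⟩

lemma sep_exists [Fintype V] (G : SimpleGraph V) (w : V → ℝ) (S T : Set V) :
    ∃ N : Finset V, IsCut G S T ↑N ∧ sep G w S T = ∑ v ∈ N, w v :=
  (cut_set_nonempty G w S T).csInf_mem (cut_set_finite G w S T)

theorem delta_antitone [Fintype V] (G : SimpleGraph V) (w : V → ℝ) (hw : ∀ u, 0 ≤ w u)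
    (S S' : Set V) (hSS' : S ⊆ S') (v t : V) :
    delta G w S' v t ≤ delta G w S v t := by
  classical
  obtain ⟨A, hA, hAsum⟩ := sep_exists G w (S ∪ {v}) ({t} : Set V)
  obtain ⟨B, hB, hBsum⟩ := sep_exists G w S' ({t} : Set V)
  set I1 := interiorSet G t (↑A : Set V) with hI1
  set I2 := interiorSet G t (↑B : Set V) with hI2
  set H1 := hullSet G t (↑A : Set V) with hH1
  set H2 := hullSet G t (↑B : Set V) with hH2
  -- the two new cuts
  set C1 : Finset V := A.filter (fun u => u ∉ I2) ∪ B.filter (fun u => u ∉ I1) with hC1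
  set C2 : Finset V := A.filter (fun u => u ∈ H2) ∪ B.filter (fun u => u ∈ H1) with hC2
  -- C1 cuts S' ∪ {v} from t
  have hcut1 : IsCut G (S' ∪ {v}) {t} ↑C1 := by
    rintro s hs t' rfl p
    have hsH : s ∈ H1 ∪ H2 := by
      rcases hs with hs | hs
      · exact Or.inr (subset_hullSet hB hs)
      · exact Or.inl (subset_hullSet hA (Or.inr hs))
    obtain ⟨u, hu, hC⟩ := union_cut p hsH
    refine ⟨u, hu, ?_⟩
    simp only [hC1, Finset.coe_union, Finset.coe_filter, Set.mem_union, Set.mem_setOf_eq]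
    rcases hC with ⟨h1, h2⟩ | ⟨h1, h2⟩
    · exact Or.inl ⟨h1, h2⟩
    · exact Or.inr ⟨h1, h2⟩
  -- C2 cuts S from t
  have hcut2 : IsCut G S {t} ↑C2 := by
    rintro s hs t' rfl p
    have hsH1 : s ∈ H1 := subset_hullSet hA (Or.inl hs)
    have hsH2 : s ∈ H2 := subset_hullSet hB (hSS' hs)
    obtain ⟨u, hu, hC⟩ := inter_cut p hsH1 hsH2
    refine ⟨u, hu, ?_⟩
    simp only [hC2, Finset.coe_union, Finset.coe_filter, Set.mem_union, Set.mem_setOf_eq]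
    rcases hC with ⟨h1, h2⟩ | ⟨h1, h2⟩
    · exact Or.inl ⟨h1, h2⟩
    · exact Or.inr ⟨h1, h2⟩
  -- weight bound: ∑ C1 + ∑ C2 ≤ ∑ A + ∑ B
  have hsub1 : C1 ∪ C2 ⊆ A ∪ B := by
    intro u hu
    simp only [hC1, hC2, Finset.mem_union, Finset.mem_filter] at hu ⊢
    tauto
  have hsub2 : C1 ∩ C2 ⊆ A ∩ B := by
    intro u hu
    simp only [hC1, hC2, Finset.mem_union, Finset.mem_inter, Finset.mem_filter] at hu ⊢
    obtain ⟨h1, h2⟩ := hu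
    constructor
    · rcases h1 with ⟨h1, _⟩ | ⟨h1, hnI1⟩
      · exact h1
      · rcases h2 with ⟨h2, _⟩ | ⟨h2, hH1mem⟩
        · exact h2
        · rcases hH1mem with hmem | hmem
          · exact hmem
          · exact absurd hmem hnI1
    · rcases h1 with ⟨h1, hnI2⟩ | ⟨h1, _⟩
      · rcases h2 with ⟨h2, hH2mem⟩ | ⟨h2, _⟩
        · rcases hH2mem with hmem | hmem
          · exact hmem
          · exact absurd hmem hnI2
        · exact h2
      · exact h1
  have hwsum : ∑ u ∈ C1, w u + ∑ u ∈ C2, w u ≤ ∑ u ∈ A, w u + ∑ u ∈ B, w u := by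
    rw [← Finset.sum_union_inter, ← Finset.sum_union_inter (s₁ := A)]
    have h1 : ∑ u ∈ C1 ∪ C2, w u ≤ ∑ u ∈ A ∪ B, w u :=
      Finset.sum_le_sum_of_subset_of_nonneg hsub1 (fun u _ _ => hw u)
    have h2 : ∑ u ∈ C1 ∩ C2, w u ≤ ∑ u ∈ A ∩ B, w u :=
      Finset.sum_le_sum_of_subset_of_nonneg hsub2 (fun u _ _ => hw u)
    linarith
  have le1 : sep G w (S' ∪ {v}) {t} ≤ ∑ u ∈ C1, w u := sep_le_sum hcut1
  have le2 : sep G w S {t} ≤ ∑ u ∈ C2, w u := sep_le_sum hcut2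
  simp only [delta]
  rw [hAsum, hBsum] at *
  linarith
end

section
/- Let G=(V,E) be a graph on the 3-SAT gadget instance: variables x_1,…,x_a, clauses c_1,…,c_b, and for a parameter m, vertices T and c_{i,j} (i ≤ b, j ≤ m) at position L, vertices x_i, x̄_i at position M, and F and e_{i,j} (i ≤ a, j ≤ m) at position R; edges connect T and F to every x_i and x̄_i, connect x_i and x̄_i to each e_{i,j}, and connect a literal vertex to c_{i,j} whenever the literal occurs in clause c_i. Distances: 0 within L, within M, and within R; 1 between M and L∪R; 2 between L and R. If the 3-SAT formula is satisfiable, then there exists a partition of the vertex set into two clusters, each inducing a connected subgraph of G and each containing its own center (T and F respectively), whose total k-median cost (sum over vertices of distance to their cluster's center) equals 2a. -/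
/-- Vertices of the 3-SAT gadget: `T` and clause copies `cl i j` at position `L`,
literal vertices `lit i p` (with `p = true` for `x_i`, `p = false` for `x̄_i`) at
position `M`, and `F` together with `e i j` at position `R`. -/
inductive GV (a b m : ℕ) where
  | T : GV a b m
  | F : GV a b m
  | cl : Fin b → Fin m → GV a b m
  | lit : Fin a → Bool → GV a b m
  | e : Fin a → Fin m → GV a b m
  deriving DecidableEq, Fintype

/-- Positions: `L = 0`, `M = 1`, `R = 2`. -/
def GV.pos {a b m : ℕ} : GV a b m → ℤ
  | .T => 0
  | .cl _ _ => 0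
  | .lit _ _ => 1
  | .e _ _ => 2
  | .F => 2

/-- The metric: distance `0` inside a position class, `1` between `M` and `L ∪ R`,
`2` between `L` and `R`. -/
def gdist {a b m : ℕ} (u v : GV a b m) : ℕ := (u.pos - v.pos).natAbs

/-- The edges of the gadget, as an (unsymmetrized) relation: `T` and `F` are joined
to every literal vertex, `lit i p` is joined to every `e i j`, and a literal vertex
is joined to `cl j j'` exactly if the literal occurs in clause `j`. -/
def gadgetRel {a b m : ℕ} (cls : Fin b → Finset (Fin a × Bool)) :
    GV a b m → GV a b m → Prop
  | .T, .lit _ _ => True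
  | .F, .lit _ _ => True
  | .lit i _, .e i' _ => i = i'
  | .lit i p, .cl j _ => (i, p) ∈ cls j
  | _, _ => False

/-- The connectivity graph of the gadget. -/
def gadgetGraph {a b m : ℕ} (cls : Fin b → Finset (Fin a × Bool)) :
    SimpleGraph (GV a b m) :=
  SimpleGraph.fromRel (gadgetRel cls)

/-! ### Auxiliary definitions for the proof -/

/-- The cluster assignment induced by a satisfying assignment `α`:
`T`, all clause copies, and the true literals go to the `T`-cluster. -/
def tAssign {a b m : ℕ} (α : Fin a → Bool) : GV a b m → Bool
  | .T => true
  | .cl _ _ => true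
  | .lit i p => α i == p
  | .F => false
  | .e _ _ => false

/-- Whether a vertex is a literal vertex. -/
def GV.isLit {a b m : ℕ} : GV a b m → Bool
  | .lit _ _ => true
  | _ => false

/-- Literal vertices are in bijection with `Fin a × Bool`. -/
def litEquiv (a b m : ℕ) : {v : GV a b m // v.isLit = true} ≃ Fin a × Bool where
  toFun v := match v with
    | ⟨.lit i p, _⟩ => (i, p)
    | ⟨.T, h⟩ => nomatch h
    | ⟨.F, h⟩ => nomatch h
    | ⟨.cl _ _, h⟩ => nomatch h
    | ⟨.e _ _, h⟩ => nomatch h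
  invFun x := ⟨.lit x.1 x.2, rfl⟩
  left_inv v := match v with
    | ⟨.lit i p, _⟩ => rfl
    | ⟨.T, h⟩ => nomatch h
    | ⟨.F, h⟩ => nomatch h
    | ⟨.cl _ _, h⟩ => nomatch h
    | ⟨.e _ _, h⟩ => nomatch h
  right_inv x := rfl

lemma connected_of_reach {V : Type*} (H : SimpleGraph V) (t : V)
    (h : ∀ v, H.Reachable v t) : H.Connected := by
  haveI : Nonempty V := ⟨t⟩
  exact ⟨fun u v => (h u).trans (h v).symm⟩

lemma gadget_adj {a b m : ℕ} (cls : Fin b → Finset (Fin a × Bool)) {u v : GV a b m}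
    (hne : u ≠ v) (h : gadgetRel cls u v) : (gadgetGraph cls).Adj u v := by
  rw [gadgetGraph, SimpleGraph.fromRel_adj]
  exact ⟨hne, Or.inl h⟩

/-- If the 3-SAT instance (clause `j` is satisfied by `α` iff some literal
`(i, p) ∈ cls j` has `α i = p`) is satisfiable, then there is a partition of the
gadget vertices into two connected clusters with centers `T` and `F` of total
`2`-median cost exactly `2a`. -/
theorem satisfiable_implies_cheap_solution (a b m : ℕ)
    (cls : Fin b → Finset (Fin a × Bool))
    (hsat : ∃ α : Fin a → Bool, ∀ j : Fin b, ∃ l ∈ cls j, α l.1 = l.2) :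
    ∃ assign : GV a b m → Bool,
      assign GV.T = true ∧ assign GV.F = false ∧
      ((gadgetGraph cls).induce {v : GV a b m | assign v = true}).Connected ∧
      ((gadgetGraph cls).induce {v : GV a b m | assign v = false}).Connected ∧
      (∑ v : GV a b m, gdist v (if assign v then GV.T else GV.F)) = 2 * a := by
  obtain ⟨α, hα⟩ := hsat
  refine ⟨tAssign α, rfl, rfl, ?_, ?_, ?_⟩
  · -- true cluster connected
    refine connected_of_reach _ ⟨GV.T, rfl⟩ ?_
    rintro ⟨v, hv⟩
    cases v with
    | T => exact SimpleGraph.Reachable.refl _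
    | F => exact absurd hv (by simp [tAssign])
    | e i j => exact absurd hv (by simp [tAssign])
    | lit i p =>
        have hadj : (gadgetGraph cls).Adj (GV.T : GV a b m) (GV.lit i p) :=
          gadget_adj cls (by simp) trivial
        exact (SimpleGraph.Adj.reachable (show ((gadgetGraph cls).induce _).Adj
          ⟨GV.lit i p, hv⟩ ⟨GV.T, rfl⟩ from hadj.symm))
    | cl j j' =>
        obtain ⟨⟨i, p⟩, hmem, hip⟩ := hα j
        have hlit : tAssign α (GV.lit i p : GV a b m) = true := by simp [tAssign, hip]
        have h1 : (gadgetGraph cls).Adj (GV.lit i p : GV a b m) (GV.cl j j') :=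
          gadget_adj cls (by simp) hmem
        have h2 : (gadgetGraph cls).Adj (GV.T : GV a b m) (GV.lit i p) :=
          gadget_adj cls (by simp) trivial
        have r1 : ((gadgetGraph cls).induce {v : GV a b m | tAssign α v = true}).Adj
            ⟨GV.cl j j', hv⟩ ⟨GV.lit i p, hlit⟩ := h1.symm
        have r2 : ((gadgetGraph cls).induce {v : GV a b m | tAssign α v = true}).Adj
            ⟨GV.lit i p, hlit⟩ ⟨GV.T, rfl⟩ := h2.symm
        exact r1.reachable.trans r2.reachable
  · -- false cluster connected
    refine connected_of_reach _ ⟨GV.F, rfl⟩ ?_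
    rintro ⟨v, hv⟩
    cases v with
    | F => exact SimpleGraph.Reachable.refl _
    | T => exact absurd hv (by simp [tAssign])
    | cl j j' => exact absurd hv (by simp [tAssign])
    | lit i p =>
        have hadj : (gadgetGraph cls).Adj (GV.F : GV a b m) (GV.lit i p) :=
          gadget_adj cls (by simp) trivial
        exact (SimpleGraph.Adj.reachable (show ((gadgetGraph cls).induce _).Adj
          ⟨GV.lit i p, hv⟩ ⟨GV.F, rfl⟩ from hadj.symm))
    | e i j =>
        have hlit : tAssign α (GV.lit i (!(α i)) : GV a b m) = false := by simp [tAssign]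
        have h1 : (gadgetGraph cls).Adj (GV.lit i (!(α i)) : GV a b m) (GV.e i j) :=
          gadget_adj cls (by simp) rfl
        have h2 : (gadgetGraph cls).Adj (GV.F : GV a b m) (GV.lit i (!(α i))) :=
          gadget_adj cls (by simp) trivial
        have r1 : ((gadgetGraph cls).induce {v : GV a b m | tAssign α v = false}).Adj
            ⟨GV.e i j, hv⟩ ⟨GV.lit i (!(α i)), hlit⟩ := h1.symm
        have r2 : ((gadgetGraph cls).induce {v : GV a b m | tAssign α v = false}).Adj
            ⟨GV.lit i (!(α i)), hlit⟩ ⟨GV.F, rfl⟩ := h2.symm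
        exact r1.reachable.trans r2.reachable
  · -- cost computation
    have key : ∀ v : GV a b m,
        gdist v (if tAssign α v then GV.T else GV.F) = if v.isLit = true then 1 else 0 := by
      intro v
      cases v with
      | T => rfl
      | F => rfl
      | cl j j' => rfl
      | e i j => rfl
      | lit i p =>
          cases h : α i == p <;> simp [tAssign, h, gdist, GV.pos, GV.isLit]
    rw [Finset.sum_congr rfl (fun v _ => key v), Finset.sum_boole]
    have := (Fintype.card_congr (litEquiv a b m))
    rw [Fintype.card_subtype] at this
    simp only [Nat.cast_id]
    rw [this]
    simp [Fintype.card_prod, Nat.mul_comm]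
end

section
/- In the same 3-SAT gadget instance with a, b ≥ 2: if every partition of the vertices into two connected clusters (each containing its center) has cost at least 2m whenever the formula is unsatisfiable; equivalently, if there exists a connected 2-median solution of cost strictly less than 2m, then the 3-SAT formula is satisfiable. -/
-- equiv
def gvEquiv (a b m : ℕ) : GV a b m ≃ (Unit ⊕ Unit ⊕ (Fin b × Fin m) ⊕ (Fin a × Bool) ⊕ (Fin a × Fin m)) where
  toFun v := match v with
    | .T => .inl ()
    | .F => .inr (.inl ())
    | .cl j j' => .inr (.inr (.inl (j, j')))
    | .lit i p => .inr (.inr (.inr (.inl (i, p))))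
    | .e i j => .inr (.inr (.inr (.inr (i, j))))
  invFun x := match x with
    | .inl _ => .T
    | .inr (.inl _) => .F
    | .inr (.inr (.inl (j, j'))) => .cl j j'
    | .inr (.inr (.inr (.inl (i, p)))) => .lit i p
    | .inr (.inr (.inr (.inr (i, j)))) => .e i j
  left_inv v := by cases v <;> rfl
  right_inv x := by rcases x with _ | _ | ⟨j, j'⟩ | ⟨i, p⟩ | ⟨i, j⟩ <;> rfl

lemma sum_decomp {a b m : ℕ} (f : GV a b m → ℕ) :
    ∑ v : GV a b m, f v =
      f .T + f .F + (∑ p : Fin b × Fin m, f (.cl p.1 p.2)) +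
        (∑ p : Fin a × Bool, f (.lit p.1 p.2)) + (∑ p : Fin a × Fin m, f (.e p.1 p.2)) := by
  have h1 : ∀ x : Unit, (gvEquiv a b m).symm (.inl x) = GV.T := fun _ => rfl
  have h2 : ∀ x : Unit, (gvEquiv a b m).symm (.inr (.inl x)) = GV.F := fun _ => rfl
  have h3 : ∀ x : Fin b × Fin m, (gvEquiv a b m).symm (.inr (.inr (.inl x))) = GV.cl x.1 x.2 := fun _ => rfl
  have h4 : ∀ x : Fin a × Bool, (gvEquiv a b m).symm (.inr (.inr (.inr (.inl x)))) = GV.lit x.1 x.2 := fun _ => rfl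
  have h5 : ∀ x : Fin a × Fin m, (gvEquiv a b m).symm (.inr (.inr (.inr (.inr x)))) = GV.e x.1 x.2 := fun _ => rfl
  rw [← Equiv.sum_comp (gvEquiv a b m).symm f]
  simp only [Fintype.sum_sum_type, h1, h2, h3, h4, h5]
  simp [add_assoc]

lemma pos_nonneg {a b m : ℕ} (v : GV a b m) : 0 ≤ v.pos := by cases v <;> simp [GV.pos]
lemma pos_le_two {a b m : ℕ} (v : GV a b m) : v.pos ≤ 2 := by cases v <;> simp [GV.pos]

lemma exists_adj_mem {V : Type*} (G : SimpleGraph V) (S : Set V)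
    (hc : (G.induce S).Connected) {u w : V} (hu : u ∈ S) (hw : w ∈ S) (hne : u ≠ w) :
    ∃ x, x ∈ S ∧ G.Adj u x := by
  obtain ⟨p⟩ := hc.preconnected ⟨u, hu⟩ ⟨w, hw⟩
  have hnil : ¬ p.Nil := SimpleGraph.Walk.not_nil_of_ne (by simpa [Subtype.ext_iff] using hne)
  obtain ⟨x, hadj, -⟩ := SimpleGraph.Walk.not_nil_iff.mp hnil
  exact ⟨x.1, x.2, hadj⟩

lemma adj_e {a b m : ℕ} {cls : Fin b → Finset (Fin a × Bool)} {i : Fin a} {j : Fin m}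
    {x : GV a b m} (h : (gadgetGraph cls).Adj (.e i j) x) : ∃ p, x = .lit i p := by
  rw [gadgetGraph, SimpleGraph.fromRel_adj] at h
  obtain ⟨-, h | h⟩ := h
  · cases x <;> exact h.elim
  · cases x with
    | lit i' p => exact ⟨p, by rw [h]⟩
    | T => exact h.elim
    | F => exact h.elim
    | cl _ _ => exact h.elim
    | e _ _ => exact h.elim

lemma adj_cl {a b m : ℕ} {cls : Fin b → Finset (Fin a × Bool)} {j : Fin b} {j' : Fin m}
    {x : GV a b m} (h : (gadgetGraph cls).Adj (.cl j j') x) :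
    ∃ i p, x = .lit i p ∧ (i, p) ∈ cls j := by
  rw [gadgetGraph, SimpleGraph.fromRel_adj] at h
  obtain ⟨-, h | h⟩ := h
  · cases x <;> exact h.elim
  · cases x with
    | lit i p => exact ⟨i, p, rfl, h⟩
    | T => exact h.elim
    | F => exact h.elim
    | cl _ _ => exact h.elim
    | e _ _ => exact h.elim

lemma core {a b m : ℕ} (ha : 2 ≤ a) (hb : 2 ≤ b) (cls : Fin b → Finset (Fin a × Bool))
    (g : GV a b m → Bool) (cA cB : GV a b m)
    (hgA : g cA = true) (hgB : g cB = false)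
    (hA : cA.pos = 0) (hB : cB.pos = 2)
    (hconA : ((gadgetGraph cls).induce {v : GV a b m | g v = true}).Connected)
    (hconB : ((gadgetGraph cls).induce {v : GV a b m | g v = false}).Connected)
    (hcost : (∑ v : GV a b m, gdist v (if g v then cA else cB)) < 2 * m) :
    ∃ α : Fin a → Bool, ∀ j : Fin b, ∃ l ∈ cls j, α l.1 = l.2 := by
  classical
  set badC : Finset (Fin b × Fin m) :=
    Finset.univ.filter (fun p => ¬ g (.cl p.1 p.2) = true) with hbadC
  set badE : Finset (Fin a × Fin m) :=
    Finset.univ.filter (fun p => g (.e p.1 p.2) = true) with hbadE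
  have hSCL : (∑ p : Fin b × Fin m, gdist (GV.cl p.1 p.2)
      (if g (.cl p.1 p.2) then cA else cB)) = 2 * badC.card := by
    have : ∀ p : Fin b × Fin m, gdist (GV.cl p.1 p.2)
        (if g (.cl p.1 p.2) then cA else cB) = if g (.cl p.1 p.2) = true then 0 else 2 := by
      intro p
      rcases hg : g (.cl p.1 p.2)
      · simp only [hg, Bool.false_eq_true, if_false]
        show ((GV.cl p.1 p.2).pos - cB.pos).natAbs = 2
        rw [hB]; rfl
      · simp only [hg, if_true]
        show ((GV.cl p.1 p.2).pos - cA.pos).natAbs = 0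
        rw [hA]; rfl
    rw [Finset.sum_congr rfl (fun p _ => this p), Finset.sum_ite]
    simp [hbadC, mul_comm]
  have hSE : (∑ p : Fin a × Fin m, gdist (GV.e p.1 p.2)
      (if g (.e p.1 p.2) then cA else cB)) = 2 * badE.card := by
    have : ∀ p : Fin a × Fin m, gdist (GV.e p.1 p.2)
        (if g (.e p.1 p.2) then cA else cB) = if g (.e p.1 p.2) = true then 2 else 0 := by
      intro p
      rcases hg : g (.e p.1 p.2)
      · simp only [hg, Bool.false_eq_true, if_false]
        show ((GV.e p.1 p.2).pos - cB.pos).natAbs = 0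
        rw [hB]; rfl
      · simp only [hg, if_true]
        show ((GV.e p.1 p.2).pos - cA.pos).natAbs = 2
        rw [hA]; rfl
    rw [Finset.sum_congr rfl (fun p _ => this p), Finset.sum_ite]
    simp [hbadE, mul_comm]
  have hSLIT : (∑ p : Fin a × Bool, gdist (GV.lit p.1 p.2)
      (if g (.lit p.1 p.2) then cA else cB)) = 2 * a := by
    have : ∀ p : Fin a × Bool, gdist (GV.lit p.1 p.2)
        (if g (.lit p.1 p.2) then cA else cB) = 1 := by
      intro p
      rcases hg : g (.lit p.1 p.2)
      · simp only [hg, Bool.false_eq_true, if_false]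
        show ((GV.lit p.1 p.2).pos - cB.pos).natAbs = 1
        rw [hB]; rfl
      · simp only [hg, if_true]
        show ((GV.lit p.1 p.2).pos - cA.pos).natAbs = 1
        rw [hA]; rfl
    rw [Finset.sum_congr rfl (fun p _ => this p)]
    simp [mul_comm]
  have hsum := sum_decomp (fun v : GV a b m => gdist v (if g v then cA else cB))
  rw [hSCL, hSE, hSLIT] at hsum
  rw [hsum] at hcost
  have hkey : badC.card + a + badE.card < m := by omega
  -- for each variable, some e-vertex (distinct from cB) is in the false cluster
  have hlitF : ∀ i : Fin a, ∃ p : Bool, g (.lit i p) = false := by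
    intro i
    have hinj : (Finset.univ.filter (fun j : Fin m => g (.e i j) = true)).card ≤ badE.card := by
      apply Finset.card_le_card_of_injOn (fun j => (i, j))
      · intro j hj; simp only [hbadE, Finset.mem_coe, Finset.mem_filter, Finset.mem_univ, true_and] at hj ⊢
        exact hj
      · intro x _ y _ hxy; simpa using hxy
    have hsplit := Finset.card_filter_add_card_filter_not
      (s := (Finset.univ : Finset (Fin m))) (p := fun j : Fin m => g (.e i j) = true)
    have hcard2 : 1 < (Finset.univ.filter (fun j : Fin m => ¬ g (.e i j) = true)).card := by
      simp only [Finset.card_univ, Fintype.card_fin] at hsplit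
      omega
    obtain ⟨j₁, hj₁, j₂, hj₂, hne⟩ := Finset.one_lt_card.mp hcard2
    simp only [Finset.mem_filter, Finset.mem_univ, true_and, Bool.not_eq_true] at hj₁ hj₂
    have hpick : ∃ j : Fin m, g (.e i j) = false ∧ (GV.e i j : GV a b m) ≠ cB := by
      by_cases hc : (GV.e i j₁ : GV a b m) = cB
      · refine ⟨j₂, hj₂, fun hc2 => hne ?_⟩
        rw [← hc2] at hc
        cases hc; rfl
      · exact ⟨j₁, hj₁, hc⟩
    obtain ⟨j, hj, hjne⟩ := hpick
    obtain ⟨x, hxS, hadj⟩ := exists_adj_mem (gadgetGraph cls) {v : GV a b m | g v = false}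
      hconB hj hgB hjne
    obtain ⟨p, rfl⟩ := adj_e hadj
    exact ⟨p, hxS⟩
  -- for each clause, some literal vertex of the clause is in the true cluster
  have hclause : ∀ j : Fin b, ∃ i p, (i, p) ∈ cls j ∧ g (.lit i p) = true := by
    intro j
    have hinj : (Finset.univ.filter (fun j' : Fin m => ¬ g (.cl j j') = true)).card
        ≤ badC.card := by
      apply Finset.card_le_card_of_injOn (fun j' => (j, j'))
      · intro j' hj'; simp only [hbadC, Finset.mem_coe, Finset.mem_filter, Finset.mem_univ, true_and] at hj' ⊢
        exact hj'
      · intro x _ y _ hxy; simpa using hxy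
    have hsplit := Finset.card_filter_add_card_filter_not
      (s := (Finset.univ : Finset (Fin m))) (p := fun j' : Fin m => g (.cl j j') = true)
    have hcard2 : 1 < (Finset.univ.filter (fun j' : Fin m => g (.cl j j') = true)).card := by
      simp only [Finset.card_univ, Fintype.card_fin] at hsplit
      omega
    obtain ⟨j₁, hj₁, j₂, hj₂, hne⟩ := Finset.one_lt_card.mp hcard2
    simp only [Finset.mem_filter, Finset.mem_univ, true_and] at hj₁ hj₂
    have hpick : ∃ j' : Fin m, g (.cl j j') = true ∧ (GV.cl j j' : GV a b m) ≠ cA := by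
      by_cases hc : (GV.cl j j₁ : GV a b m) = cA
      · refine ⟨j₂, hj₂, fun hc2 => hne ?_⟩
        rw [← hc2] at hc
        cases hc; rfl
      · exact ⟨j₁, hj₁, hc⟩
    obtain ⟨j', hj', hjne⟩ := hpick
    obtain ⟨x, hxS, hadj⟩ := exists_adj_mem (gadgetGraph cls) {v : GV a b m | g v = true}
      hconA hj' hgA hjne
    obtain ⟨i, p, rfl, hmem⟩ := adj_cl hadj
    exact ⟨i, p, hmem, hxS⟩
  refine ⟨fun i => g (.lit i true), fun j => ?_⟩
  obtain ⟨i, p, hmem, hg⟩ := hclause j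
  refine ⟨(i, p), hmem, ?_⟩
  cases p with
  | true => exact hg
  | false =>
    obtain ⟨q, hq⟩ := hlitF i
    cases q with
    | false => rw [hg] at hq; exact absurd hq (by simp)
    | true => exact hq

/-- If, for `a, b ≥ 2`, there is a feasible connected `2`-median solution on the
gadget (a partition into two connected clusters, each containing its designated
center) of cost strictly less than `2m`, then the 3-SAT formula is satisfiable. -/
theorem cheap_solution_implies_satisfiable (a b m : ℕ) (ha : 2 ≤ a) (hb : 2 ≤ b)
    (cls : Fin b → Finset (Fin a × Bool))
    (h : ∃ (assign : GV a b m → Bool) (c₁ c₂ : GV a b m),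
      assign c₁ = true ∧ assign c₂ = false ∧
      ((gadgetGraph cls).induce {v : GV a b m | assign v = true}).Connected ∧
      ((gadgetGraph cls).induce {v : GV a b m | assign v = false}).Connected ∧
      (∑ v : GV a b m, gdist v (if assign v then c₁ else c₂)) < 2 * m) :
    ∃ α : Fin a → Bool, ∀ j : Fin b, ∃ l ∈ cls j, α l.1 = l.2 := by
  classical
  obtain ⟨assign, c₁, c₂, hc₁, hc₂, hconT, hconF, hcost⟩ := h
  have hsum := sum_decomp (fun v : GV a b m => gdist v (if assign v then c₁ else c₂))
  have h2b : 2 * m ≤ b * m := Nat.mul_le_mul_right m hb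
  have h2a : 2 * m ≤ a * m := Nat.mul_le_mul_right m ha
  -- some center is at position 0
  have hpos0 : c₁.pos = 0 ∨ c₂.pos = 0 := by
    by_contra hcon
    push_neg at hcon
    obtain ⟨h1, h2⟩ := hcon
    have hge : ∀ p : Fin b × Fin m,
        1 ≤ gdist (GV.cl p.1 p.2) (if assign (GV.cl p.1 p.2) then c₁ else c₂) := by
      intro p
      have k1 := pos_nonneg c₁; have k2 := pos_nonneg c₂
      have e1 : gdist (GV.cl p.1 p.2) c₁ = ((0 : ℤ) - c₁.pos).natAbs := rfl
      have e2 : gdist (GV.cl p.1 p.2) c₂ = ((0 : ℤ) - c₂.pos).natAbs := rfl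
      split <;> [rw [e1]; rw [e2]] <;> omega
    have hlb : b * m ≤ ∑ p : Fin b × Fin m,
        gdist (GV.cl p.1 p.2) (if assign (GV.cl p.1 p.2) then c₁ else c₂) := by
      calc b * m = ∑ _p : Fin b × Fin m, 1 := by simp [Finset.card_univ, mul_comm]
      _ ≤ _ := Finset.sum_le_sum (fun p _ => hge p)
    omega
  -- some center is at position 2
  have hpos2 : c₁.pos = 2 ∨ c₂.pos = 2 := by
    by_contra hcon
    push_neg at hcon
    obtain ⟨h1, h2⟩ := hcon
    have k1 := pos_le_two c₁; have k2 := pos_le_two c₂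
    have hge : ∀ p : Fin a × Fin m,
        1 ≤ gdist (GV.e p.1 p.2) (if assign (GV.e p.1 p.2) then c₁ else c₂) := by
      intro p
      have e1 : gdist (GV.e p.1 p.2) c₁ = ((2 : ℤ) - c₁.pos).natAbs := rfl
      have e2 : gdist (GV.e p.1 p.2) c₂ = ((2 : ℤ) - c₂.pos).natAbs := rfl
      split <;> [rw [e1]; rw [e2]] <;> omega
    have hlb : a * m ≤ ∑ p : Fin a × Fin m,
        gdist (GV.e p.1 p.2) (if assign (GV.e p.1 p.2) then c₁ else c₂) := by
      calc a * m = ∑ _p : Fin a × Fin m, 1 := by simp [Finset.card_univ, mul_comm]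
      _ ≤ _ := Finset.sum_le_sum (fun p _ => hge p)
    omega
  rcases hpos0 with h0 | h0 <;> rcases hpos2 with h2 | h2
  · rw [h0] at h2; exact absurd h2 (by norm_num)
  · exact core ha hb cls assign c₁ c₂ hc₁ hc₂ h0 h2 hconT hconF hcost
  · -- c₂ at 0, c₁ at 2 : swap roles
    have hset1 : {v : GV a b m | (!assign v) = true} = {v : GV a b m | assign v = false} := by
      ext v; simp
    have hset2 : {v : GV a b m | (!assign v) = false} = {v : GV a b m | assign v = true} := by
      ext v; simp
    have hcost' : (∑ v : GV a b m, gdist v (if (!assign v) then c₂ else c₁)) < 2 * m := by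
      have : ∀ v : GV a b m, (if (!assign v) then c₂ else c₁) =
          (if assign v then c₁ else c₂) := by
        intro v; cases hv : assign v <;> simp [hv]
      calc (∑ v : GV a b m, gdist v (if (!assign v) then c₂ else c₁))
          = ∑ v : GV a b m, gdist v (if assign v then c₁ else c₂) :=
            Finset.sum_congr rfl (fun v _ => by rw [this v])
        _ < 2 * m := hcost
    exact core ha hb cls (fun v => !assign v) c₂ c₁ (by simp [hc₂]) (by simp [hc₁]) h0 h2
      (hset1 ▸ hconF) (hset2 ▸ hconT) hcost'
  · rw [h0] at h2; exact absurd h2 (by norm_num)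
end

section
/- Let G=(V,E) be a graph constructed from a graph H=(W,F) with W = {v_1,…,v_n} as follows: V = {a, b, x_1,…,x_n, y_1,…,y_n}; for each i, edges {x_i,a}, {x_i,b}, {x_i,y_i}; and for each edge {v_i,v_j} ∈ F, edges {x_i,y_j} and {x_j,y_i}. Place a and all x_i at coordinate 0 and b and all y_i at coordinate 1 (so distances are 0 or 1). If H has a dominating set of size s, then there exist two (possibly overlapping) clusters covering V, each inducing a connected subgraph of G, with centers a and b respectively, of total cost s (cost = sum over cluster memberships of the distance to the center). -/
/-- Vertices of the dominating-set gadget: `a` and the `x i` at position `0`,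
`b` and the `y i` at position `1`. -/
inductive DV (n : ℕ) where
  | a : DV n
  | b : DV n
  | x : Fin n → DV n
  | y : Fin n → DV n
  deriving DecidableEq, Fintype

def DV.pos {n : ℕ} : DV n → ℕ
  | .a => 0
  | .x _ => 0
  | .b => 1
  | .y _ => 1

/-- Distance `0` between vertices at the same position, `1` otherwise. -/
def ddist {n : ℕ} (u v : DV n) : ℕ := if u.pos = v.pos then 0 else 1

/-- Edges of the gadget (unsymmetrized): `x i` is joined to `a`, to `b`, to `y i`,
and to `y j` whenever `{v_i, v_j}` is an edge of `H`. -/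
def domRel {n : ℕ} (H : SimpleGraph (Fin n)) : DV n → DV n → Prop
  | .x _, .a => True
  | .x _, .b => True
  | .x i, .y j => i = j ∨ H.Adj i j
  | _, _ => False

/-- The connectivity graph of the dominating-set gadget. -/
def domGraph {n : ℕ} (H : SimpleGraph (Fin n)) : SimpleGraph (DV n) :=
  SimpleGraph.fromRel (domRel H)

/-- If `H` has a dominating set of size `s`, then there are two (possibly
overlapping) clusters covering all gadget vertices, each inducing a connected
subgraph and containing its center (`a`, resp. `b`), of total cost `s`. -/
theorem dominatingSet_implies_solution (n : ℕ) (H : SimpleGraph (Fin n))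
    (S : Finset (Fin n)) (hdom : ∀ i : Fin n, i ∈ S ∨ ∃ j ∈ S, H.Adj i j)
    (s : ℕ) (hcard : S.card = s) :
    ∃ Va Vb : Finset (DV n),
      (↑Va ∪ ↑Vb : Set (DV n)) = Set.univ ∧
      DV.a ∈ Va ∧ DV.b ∈ Vb ∧
      ((domGraph H).induce (↑Va : Set (DV n))).Connected ∧
      ((domGraph H).induce (↑Vb : Set (DV n))).Connected ∧
      (∑ v ∈ Va, ddist v DV.a) + (∑ v ∈ Vb, ddist v DV.b) = s := by

  classical
  set Va : Finset (DV n) := Finset.univ.filter (fun v => DV.pos v = 0) with hVa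
  set Vb : Finset (DV n) :=
    insert DV.b ((S.image DV.x) ∪ (Finset.univ.image DV.y)) with hVb
  have hxVa : ∀ i : Fin n, DV.x i ∈ Va := by
    intro i; exact Finset.mem_filter.mpr ⟨Finset.mem_univ _, rfl⟩
  have haVa : (DV.a : DV n) ∈ Va := Finset.mem_filter.mpr ⟨Finset.mem_univ _, rfl⟩
  have hbVb : (DV.b : DV n) ∈ Vb := by simp [hVb]
  have hyVb : ∀ i : Fin n, DV.y i ∈ Vb := by
    intro i; simp [hVb]
  have hxVb : ∀ i ∈ S, DV.x i ∈ Vb := by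
    intro i hi; exact Finset.mem_insert_of_mem (Finset.mem_union_left _ (Finset.mem_image_of_mem _ hi))
  refine ⟨Va, Vb, ?_, haVa, hbVb, ?_, ?_, ?_⟩
  · ext v
    cases v with
    | a => simp [haVa]
    | b => simp [hbVb]
    | x i => simp [hxVa i]
    | y i => simp [hyVb i]
  · -- Va connected
    rw [SimpleGraph.connected_iff]
    refine ⟨?_, ⟨⟨DV.a, haVa⟩⟩⟩
    have key : ∀ u : (↑Va : Set (DV n)),
        ((domGraph H).induce (↑Va : Set (DV n))).Reachable u ⟨DV.a, haVa⟩ := by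
      rintro ⟨u, hu⟩
      cases u with
      | a => exact SimpleGraph.Reachable.refl _
      | b => exact absurd (Finset.mem_filter.mp (Finset.mem_coe.mp hu)).2 one_ne_zero
      | y i => exact absurd (Finset.mem_filter.mp (Finset.mem_coe.mp hu)).2 one_ne_zero
      | x i =>
        refine SimpleGraph.Adj.reachable ?_
        simp only [SimpleGraph.comap_adj, Function.Embedding.coe_subtype, domGraph,
          SimpleGraph.fromRel_adj]
        exact ⟨by simp, Or.inl trivial⟩
    intro u v
    exact (key u).trans (key v).symm
  · -- Vb connected
    rw [SimpleGraph.connected_iff]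
    refine ⟨?_, ⟨⟨DV.b, hbVb⟩⟩⟩
    have key : ∀ u : (↑Vb : Set (DV n)),
        ((domGraph H).induce (↑Vb : Set (DV n))).Reachable u ⟨DV.b, hbVb⟩ := by
      rintro ⟨u, hu⟩
      cases u with
      | b => exact SimpleGraph.Reachable.refl _
      | a =>
        exfalso
        simp only [hVb, Finset.coe_insert, Set.mem_insert_iff, Finset.coe_union,
          Set.mem_union, Finset.coe_image, Set.mem_image] at hu
        rcases hu with h | h | h
        · cases h
        · obtain ⟨i, _, h⟩ := h; cases h
        · obtain ⟨i, _, h⟩ := h; cases h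
      | x i =>
        refine SimpleGraph.Adj.reachable ?_
        simp only [SimpleGraph.comap_adj, Function.Embedding.coe_subtype, domGraph,
          SimpleGraph.fromRel_adj]
        exact ⟨by simp, Or.inl trivial⟩
      | y i =>
        obtain ⟨j, hjS, hadj⟩ : ∃ j ∈ S, j = i ∨ H.Adj j i := by
          rcases hdom i with h | ⟨j, hj, hadj⟩
          · exact ⟨i, h, Or.inl rfl⟩
          · exact ⟨j, hj, Or.inr hadj.symm⟩
        have h1 : ((domGraph H).induce (↑Vb : Set (DV n))).Adj
            ⟨DV.y i, hu⟩ ⟨DV.x j, hxVb j hjS⟩ := by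
          simp only [SimpleGraph.comap_adj, Function.Embedding.coe_subtype, domGraph,
            SimpleGraph.fromRel_adj]
          refine ⟨by simp, Or.inr ?_⟩
          show j = i ∨ H.Adj j i
          exact hadj
        have h2 : ((domGraph H).induce (↑Vb : Set (DV n))).Adj
            ⟨DV.x j, hxVb j hjS⟩ ⟨DV.b, hbVb⟩ := by
          simp only [SimpleGraph.comap_adj, Function.Embedding.coe_subtype, domGraph,
            SimpleGraph.fromRel_adj]
          exact ⟨by simp, Or.inl trivial⟩
        exact h1.reachable.trans h2.reachable
    intro u v
    exact (key u).trans (key v).symm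
  · -- cost
    have h1 : (∑ v ∈ Va, ddist v DV.a) = 0 := by
      refine Finset.sum_eq_zero ?_
      intro v hv
      simp only [hVa, Finset.mem_filter] at hv
      exact if_pos hv.2
    have hbnot : (DV.b : DV n) ∉ (S.image DV.x) ∪ (Finset.univ.image DV.y) := by
      simp
    have hdisj : Disjoint (S.image DV.x) (Finset.univ.image (DV.y (n := n))) := by
      rw [Finset.disjoint_left]
      rintro v hv hv'
      simp only [Finset.mem_image] at hv hv'
      obtain ⟨i, _, rfl⟩ := hv
      obtain ⟨j, _, h⟩ := hv'
      cases h
    have h2 : (∑ v ∈ Vb, ddist v DV.b) = s := by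
      rw [hVb, Finset.sum_insert hbnot, Finset.sum_union hdisj]
      have e1 : ddist (DV.b : DV n) DV.b = 0 := by simp [ddist]
      have e2 : (∑ v ∈ S.image DV.x, ddist v DV.b) = S.card := by
        rw [Finset.sum_image (by intro i _ j _ h; exact DV.x.inj h)]
        simp [ddist, DV.pos]
      have e3 : (∑ v ∈ Finset.univ.image (DV.y (n := n)), ddist v DV.b) = 0 := by
        refine Finset.sum_eq_zero ?_
        intro v hv
        simp only [Finset.mem_image] at hv
        obtain ⟨i, _, rfl⟩ := hv
        simp [ddist, DV.pos]
      rw [e1, e2, e3, hcard]; omega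
    rw [h1, h2, zero_add]
end

section
/- In the dominating-set gadget graph G with centers a and b (as constructed: a,b,x_1,…,x_n,y_1,…,y_n with edges {x_i,a}, {x_i,b}, {x_i,y_i}, and {x_i,y_j},{x_j,y_i} for edges {v_i,v_j} of H; positions 0 for a,x_i and 1 for b,y_i): if there exists a feasible non-disjoint connected 2-median solution of cost s < n, then H has a dominating set of size at most s. -/
lemma DV.pos_cases {n} (v : DV n) : v.pos = 0 ∨ v.pos = 1 := by
  cases v <;> simp [DV.pos]

lemma sum_ddist {n} (V : Finset (DV n)) (c : DV n) :
    ∑ v ∈ V, ddist v c = (V.filter (fun v => v.pos ≠ c.pos)).card := by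
  rw [Finset.card_filter]
  refine Finset.sum_congr rfl fun v _ => ?_
  unfold ddist
  by_cases h : v.pos = c.pos <;> simp [h]

lemma exists_neighbor {α} {G : SimpleGraph α} {s : Set α}
    (h : (G.induce s).Connected) {v w : α} (hv : v ∈ s) (hw : w ∈ s)
    (hne : v ≠ w) : ∃ u ∈ s, G.Adj v u := by
  obtain ⟨p⟩ := h.preconnected ⟨v, hv⟩ ⟨w, hw⟩
  cases p with
  | nil => exact (hne rfl).elim
  | cons hadj p' => exact ⟨_, (by exact Subtype.mem _), hadj⟩

lemma adj_y {n} {H : SimpleGraph (Fin n)} {i : Fin n} {u : DV n}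
    (h : (domGraph H).Adj (DV.y i) u) :
    ∃ j, u = DV.x j ∧ (j = i ∨ H.Adj j i) := by
  rw [domGraph, SimpleGraph.fromRel_adj] at h
  obtain ⟨-, h⟩ := h
  cases u with
  | a => simp [domRel] at h
  | b => simp [domRel] at h
  | x j => exact ⟨j, rfl, by simpa [domRel] using h⟩
  | y j => simp [domRel] at h

lemma contra_aux {n : ℕ} (V₁ V₂ : Finset (DV n)) (c₁ c₂ : DV n)
    (hcov : ∀ v : DV n, v ∈ V₁ ∨ v ∈ V₂)
    (f : Fin n → DV n) (hf : Function.Injective f)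
    (hfp₁ : ∀ i, (f i).pos ≠ c₁.pos) (hfp₂ : ∀ i, (f i).pos ≠ c₂.pos) :
    n ≤ (∑ v ∈ V₁, ddist v c₁) + (∑ v ∈ V₂, ddist v c₂) := by
  rw [sum_ddist, sum_ddist]
  have hsub : (Finset.univ.image f) ⊆
      V₁.filter (fun v => v.pos ≠ c₁.pos) ∪ V₂.filter (fun v => v.pos ≠ c₂.pos) := by
    intro v hv
    simp only [Finset.mem_image] at hv
    obtain ⟨i, -, rfl⟩ := hv
    rcases hcov (f i) with h | h
    · exact Finset.mem_union_left _ (Finset.mem_filter.2 ⟨h, hfp₁ i⟩)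
    · exact Finset.mem_union_right _ (Finset.mem_filter.2 ⟨h, hfp₂ i⟩)
  calc n = (Finset.univ.image f).card := by
            rw [Finset.card_image_of_injective _ hf, Finset.card_univ, Fintype.card_fin]
    _ ≤ _ := Finset.card_le_card hsub
    _ ≤ _ := Finset.card_union_le _ _

lemma aux {n : ℕ} (H : SimpleGraph (Fin n))
    (V₁ V₂ : Finset (DV n)) (c₁ c₂ : DV n) (hc₂ : c₂ ∈ V₂)
    (hcov : ∀ v : DV n, v ∈ V₁ ∨ v ∈ V₂)
    (hconn₂ : ((domGraph H).induce (↑V₂ : Set (DV n))).Connected)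
    (hp₁ : c₁.pos = 0) (hp₂ : c₂.pos = 1)
    (s : ℕ) (hcost : (∑ v ∈ V₁, ddist v c₁) + (∑ v ∈ V₂, ddist v c₂) = s)
    (hs : s < n) :
    ∃ S : Finset (Fin n), (∀ i : Fin n, i ∈ S ∨ ∃ j ∈ S, H.Adj i j) ∧ S.card ≤ s := by
  classical
  set F₁ := V₁.filter (fun v => v.pos ≠ c₁.pos) with hF₁
  set F₂ := V₂.filter (fun v => v.pos ≠ c₂.pos) with hF₂
  have hsF : F₁.card + F₂.card = s := by
    rw [hF₁, hF₂, ← sum_ddist, ← sum_ddist, hcost]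
  refine ⟨Finset.univ.filter (fun i => DV.y i ∈ V₁ ∨ DV.x i ∈ V₂), ?_, ?_⟩
  · intro i
    by_cases hy1 : DV.y i ∈ V₁
    · exact Or.inl (by simp [hy1])
    have hy2 : DV.y i ∈ V₂ := (hcov _).resolve_left hy1
    by_cases hex : ∃ u ∈ V₂, u ≠ DV.y i
    · obtain ⟨u, hu, hune⟩ := hex
      obtain ⟨w, hw, hadj⟩ := exists_neighbor hconn₂ (by exact_mod_cast hy2)
        (by exact_mod_cast hu) (Ne.symm hune)
      obtain ⟨j, rfl, hj⟩ := adj_y hadj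
      have hwx : DV.x j ∈ V₂ := by exact_mod_cast hw
      rcases hj with rfl | hj
      · exact Or.inl (by simp [hwx])
      · exact Or.inr ⟨j, by simp [hwx], hj.symm⟩
    · exfalso
      push_neg at hex
      -- V₂ = {y i}; all other vertices in V₁, so F₁ contains b and all y j, j ≠ i
      have hsub : insert DV.b ((Finset.univ.erase i).image DV.y) ⊆ F₁ := by
        intro v hv
        rw [Finset.mem_insert] at hv
        rcases hv with rfl | hv
        · refine Finset.mem_filter.2 ⟨?_, by rw [hp₁]; simp [DV.pos]⟩
          rcases hcov DV.b with h | h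
          · exact h
          · exact absurd (hex _ h) (by simp)
        · simp only [Finset.mem_image, Finset.mem_erase] at hv
          obtain ⟨j, ⟨hji, -⟩, rfl⟩ := hv
          refine Finset.mem_filter.2 ⟨?_, by rw [hp₁]; simp [DV.pos]⟩
          rcases hcov (DV.y j) with h | h
          · exact h
          · exact absurd (hex _ h) (by simp [hji])
      have hcard : n ≤ F₁.card := by
        have h1 : (insert DV.b ((Finset.univ.erase i).image DV.y)).card = n := by
          rw [Finset.card_insert_of_notMem (by simp),
            Finset.card_image_of_injective _ (fun a b h => by simpa using h),
            Finset.card_erase_of_mem (Finset.mem_univ i), Finset.card_univ,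
            Fintype.card_fin]
          omega
        calc n = _ := h1.symm
          _ ≤ F₁.card := Finset.card_le_card hsub
      omega
  · -- card bound
    set g : Fin n → DV n := fun i => if DV.y i ∈ V₁ then DV.y i else DV.x i with hg
    have hginj : Function.Injective g := by
      intro i j hij
      simp only [hg] at hij
      split_ifs at hij <;> simpa using hij
    have hsub : (Finset.univ.filter (fun i => DV.y i ∈ V₁ ∨ DV.x i ∈ V₂)).image g
        ⊆ F₁ ∪ F₂ := by
      intro v hv
      simp only [Finset.mem_image, Finset.mem_filter, Finset.mem_univ, true_and] at hv
      obtain ⟨i, hi, rfl⟩ := hv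
      simp only [hg]
      by_cases hy : DV.y i ∈ V₁
      · simp only [hy, if_true]
        exact Finset.mem_union_left _ (Finset.mem_filter.2 ⟨hy, by rw [hp₁]; simp [DV.pos]⟩)
      · simp only [hy, if_false]
        exact Finset.mem_union_right _
          (Finset.mem_filter.2 ⟨hi.resolve_left hy, by rw [hp₂]; simp [DV.pos]⟩)
    calc (Finset.univ.filter (fun i => DV.y i ∈ V₁ ∨ DV.x i ∈ V₂)).card
        = ((Finset.univ.filter (fun i => DV.y i ∈ V₁ ∨ DV.x i ∈ V₂)).image g).card :=
          (Finset.card_image_of_injective _ hginj).symm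
      _ ≤ (F₁ ∪ F₂).card := Finset.card_le_card hsub
      _ ≤ F₁.card + F₂.card := Finset.card_union_le _ _
      _ = s := hsF

/-- If there is a feasible non-disjoint connected `2`-median solution on the
gadget of cost `s < n`, then `H` has a dominating set of size at most `s`. -/
theorem solution_implies_dominatingSet (n : ℕ) (H : SimpleGraph (Fin n))
    (V₁ V₂ : Finset (DV n)) (c₁ c₂ : DV n) (hc₁ : c₁ ∈ V₁) (hc₂ : c₂ ∈ V₂)
    (hcover : (↑V₁ ∪ ↑V₂ : Set (DV n)) = Set.univ)
    (hconn₁ : ((domGraph H).induce (↑V₁ : Set (DV n))).Connected)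
    (hconn₂ : ((domGraph H).induce (↑V₂ : Set (DV n))).Connected)
    (s : ℕ) (hcost : (∑ v ∈ V₁, ddist v c₁) + (∑ v ∈ V₂, ddist v c₂) = s)
    (hs : s < n) :
    ∃ S : Finset (Fin n), (∀ i : Fin n, i ∈ S ∨ ∃ j ∈ S, H.Adj i j) ∧ S.card ≤ s := by
  have hcov : ∀ v : DV n, v ∈ V₁ ∨ v ∈ V₂ := by
    intro v
    have := Set.eq_univ_iff_forall.mp hcover v
    simpa using this
  rcases DV.pos_cases c₁ with hp₁ | hp₁ <;> rcases DV.pos_cases c₂ with hp₂ | hp₂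
  · exfalso
    have := contra_aux V₁ V₂ c₁ c₂ hcov DV.y
      (fun a b h => by simpa using h)
      (fun i => by rw [hp₁]; simp [DV.pos]) (fun i => by rw [hp₂]; simp [DV.pos])
    omega
  · exact aux H V₁ V₂ c₁ c₂ hc₂ hcov hconn₂ hp₁ hp₂ s hcost hs
  · obtain ⟨S, hS, hSc⟩ := aux H V₂ V₁ c₂ c₁ hc₁ (fun v => (hcov v).symm) hconn₁
      hp₂ hp₁ s (by omega) hs
    exact ⟨S, hS, hSc⟩
  · exfalso
    have := contra_aux V₁ V₂ c₁ c₂ hcov DV.x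
      (fun a b h => by simpa using h)
      (fun i => by rw [hp₁]; simp [DV.pos]) (fun i => by rw [hp₂]; simp [DV.pos])
    omega
end

section
/- Let y_c^c ∈ [0,1] for c in a finite set C, with Σ_{c∈C} y_c^c ≤ k and y_c^c ≥ 1/2 for all c. Partition C as H = {c : y_c^c < 3/4} and O = {c : y_c^c ≥ 3/4}, and let a_c = 1 − y_c^c. Suppose a procedure maintains sets C_1, C_{1/2}, O' ⊆ O with the invariant that, initially, C_1 = ∅, C_{1/2} = H, O' = O, and each iteration either (i) moves one c ∈ O' to C_{1/2}, or (ii) moves one c ∈ O' to C_{1/2} and another r ∈ O' to C_1. Then the quantity |C_1| + (1/2)|C_{1/2}| + Σ_{c∈O'} y_c^c is at most k initially and never increases; in particular it stays at most k throughout. -/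
/-- The invariant `|C₁| + |C_{1/2}|/2 + Σ_{c ∈ O'} y c ≤ k` holds initially
(with `C₁ = ∅`, `C_{1/2} = H`, `O' = O`) and is preserved by both kinds of
update steps. -/
theorem inv_half_integral {C : Type*} [Fintype C] [DecidableEq C] (k : ℝ)
    (y : C → ℝ) (hy : ∀ c, 1 / 2 ≤ y c ∧ y c ≤ 1) (hsum : ∑ c, y c ≤ k)
    (H O : Finset C) (hH : ∀ c, c ∈ H ↔ y c < 3 / 4) (hO : ∀ c, c ∈ O ↔ 3 / 4 ≤ y c) :
    ((∅ : Finset C).card + (H.card : ℝ) / 2 + ∑ c ∈ O, y c ≤ k) ∧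
    (∀ C₁ C₁₂ O' : Finset C, O' ⊆ O →
      (C₁.card : ℝ) + (C₁₂.card : ℝ) / 2 + ∑ c ∈ O', y c ≤ k →
      ∀ c ∈ O',
        ((C₁.card : ℝ) + ((insert c C₁₂).card : ℝ) / 2 + ∑ c' ∈ O'.erase c, y c' ≤ k)) ∧
    (∀ C₁ C₁₂ O' : Finset C, O' ⊆ O →
      (C₁.card : ℝ) + (C₁₂.card : ℝ) / 2 + ∑ c ∈ O', y c ≤ k →
      ∀ c ∈ O', ∀ r ∈ O', r ≠ c →
        (((insert r C₁).card : ℝ) + ((insert c C₁₂).card : ℝ) / 2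
          + ∑ c' ∈ (O'.erase c).erase r, y c' ≤ k)) := by
  refine ⟨?_, ?_, ?_⟩
  · have hdisj : Disjoint H O := by
      rw [Finset.disjoint_left]
      intro a ha haO
      exact absurd ((hO a).1 haO) (not_le.2 ((hH a).1 ha))
    have hunion : H ∪ O = Finset.univ := by
      ext a
      simp only [Finset.mem_union, Finset.mem_univ, iff_true, hH, hO]
      exact lt_or_ge (y a) (3/4) |>.imp id id
    have hsplit : ∑ c ∈ H, y c + ∑ c ∈ O, y c = ∑ c, y c := by
      rw [← Finset.sum_union hdisj, hunion]
    have hHcard : (H.card : ℝ) / 2 ≤ ∑ c ∈ H, y c := by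
      have : ∑ c ∈ H, (1/2 : ℝ) ≤ ∑ c ∈ H, y c :=
        Finset.sum_le_sum fun c _ => (hy c).1
      simpa [Finset.sum_const, div_eq_mul_inv, mul_comm] using this
    simp only [Finset.card_empty, Nat.cast_zero]
    linarith
  · intro C₁ C₁₂ O' hsub hinv c hc
    have hyc : 3/4 ≤ y c := (hO c).1 (hsub hc)
    have hsum' : ∑ c' ∈ O'.erase c, y c' = ∑ c' ∈ O', y c' - y c := by
      rw [Finset.sum_erase_eq_sub hc]
    have hcard : ((insert c C₁₂).card : ℝ) ≤ C₁₂.card + 1 := by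
      exact_mod_cast Finset.card_insert_le _ _
    linarith
  · intro C₁ C₁₂ O' hsub hinv c hc r hr hrc
    have hyc : 3/4 ≤ y c := (hO c).1 (hsub hc)
    have hyr : 3/4 ≤ y r := (hO r).1 (hsub hr)
    have hr' : r ∈ O'.erase c := Finset.mem_erase.2 ⟨hrc, hr⟩
    have hsum1 : ∑ c' ∈ O'.erase c, y c' = ∑ c' ∈ O', y c' - y c := by
      rw [Finset.sum_erase_eq_sub hc]
    have hsum2 : ∑ c' ∈ (O'.erase c).erase r, y c' = ∑ c' ∈ O'.erase c, y c' - y r := by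
      rw [Finset.sum_erase_eq_sub hr']
    have hcard1 : ((insert c C₁₂).card : ℝ) ≤ C₁₂.card + 1 := by
      exact_mod_cast Finset.card_insert_le _ _
    have hcard2 : ((insert r C₁).card : ℝ) ≤ C₁.card + 1 := by
      exact_mod_cast Finset.card_insert_le _ _
    linarith
end
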